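/- Let p, q : ℕ and ℍ = Quaternion ℝ. On (Fin p → ℍ) × (Fin q → ℍ) define h(v) = ∑_i star (v.1 i) * (v.1 i) − ∑_j star (v.2 j) * (v.2 j) ∈ ℍ. Let W be a subset of (Fin p → ℍ) × (Fin q → ℍ) closed under addition and under right multiplication by quaternion scalars (v ∈ W, c ∈ ℍ implies (fun i => v.1 i * c, fun j => v.2 j * c) ∈ W), and suppose (h v).re < 0 for every v ∈ W with v ≠ 0. Then: (a) the projection v ↦ v.2 is injective on W; (b) if this projection maps W onto (Fin q → ℍ), then there is a unique X ∈ Matrix (Fin p) (Fin q) ℍ with W = {(X *ᵥ w, w) | w ∈ (Fin q → ℍ)}, and for this X one has (star w ⬝ᵥ ((1 − Xᴴ * X) *ᵥ w)).re > 0 for every nonzero w ∈ (Fin q → ℍ). -/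

import Mathlib

open Matrix

private lemma quat_re_sum {n : Type*} (s : Finset n) (f : n → Quaternion ℝ) :
    (∑ i ∈ s, f i).re = ∑ i ∈ s, (f i).re := by
  induction s using Finset.cons_induction with
  | empty => simp; rfl
  | cons a s ha ih => simp [Finset.sum_cons, ih]

/-- Quaternionic bounded symmetric domain of `Sp(p,q)`: an `h`-negative definite right
ℍ-subspace `W ⊆ ℍ^p × ℍ^q` projects injectively to `ℍ^q`, and if that projection is onto
then `W` is the graph of a unique quaternionic matrix `X` with `1 − Xᴴ X` positive
definite. -/
theorem stmt_17 (p q : ℕ)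
    (h : ((Fin p → Quaternion ℝ) × (Fin q → Quaternion ℝ)) → Quaternion ℝ)
    (hh : ∀ v, h v = (∑ i, star (v.1 i) * v.1 i) - ∑ j, star (v.2 j) * v.2 j)
    (W : Set ((Fin p → Quaternion ℝ) × (Fin q → Quaternion ℝ)))
    (Wadd : ∀ v ∈ W, ∀ v' ∈ W, v + v' ∈ W)
    (Wsmul : ∀ v ∈ W, ∀ c : Quaternion ℝ,
      ((fun i => v.1 i * c, fun j => v.2 j * c) :
        (Fin p → Quaternion ℝ) × (Fin q → Quaternion ℝ)) ∈ W)
    (Wneg : ∀ v ∈ W, v ≠ 0 → (h v).re < 0) :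
    (∀ v ∈ W, ∀ v' ∈ W, v.2 = v'.2 → v = v') ∧
    ((∀ w : Fin q → Quaternion ℝ, ∃ v ∈ W, v.2 = w) →
      ∃! X : Matrix (Fin p) (Fin q) (Quaternion ℝ),
        W = {v | ∃ w, v = (X *ᵥ w, w)} ∧
        ∀ w : Fin q → Quaternion ℝ, w ≠ 0 →
          (star w ⬝ᵥ ((1 - X.conjTranspose * X) *ᵥ w)).re > 0) := by
  classical
  have key : ∀ v ∈ W, v.2 = 0 → v = 0 := by
    intro v hv h2
    by_contra hne
    have hlt := Wneg v hv hne
    rw [hh, h2] at hlt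
    simp only [Pi.zero_apply, star_zero, zero_mul, Finset.sum_const_zero, sub_zero] at hlt
    rw [quat_re_sum] at hlt
    have hge : (0:ℝ) ≤ ∑ i, (star (v.1 i) * v.1 i).re :=
      Finset.sum_nonneg fun i _ => by
        rw [Quaternion.star_mul_self, Quaternion.re_coe]
        exact Quaternion.normSq_nonneg
    linarith
  have inj : ∀ v ∈ W, ∀ v' ∈ W, v.2 = v'.2 → v = v' := by
    intro v hv v' hv' h2
    have hm := Wsmul v' hv' (-1)
    have hu := Wadd v hv _ hm
    have hu2 : (v + ((fun i => v'.1 i * (-1), fun j => v'.2 j * (-1)) :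
        (Fin p → Quaternion ℝ) × (Fin q → Quaternion ℝ))).2 = 0 := by
      funext j
      simp [congrFun h2 j]
    have h0 := key _ hu hu2
    have h1 := congrArg Prod.fst h0
    refine Prod.ext ?_ h2
    funext i
    have := congrFun h1 i
    simp only [Prod.fst_add, Pi.add_apply, mul_neg_one, Prod.fst_zero, Pi.zero_apply,
      ← sub_eq_add_neg, sub_eq_zero] at this
    exact this
  refine ⟨inj, ?_⟩
  intro hsurj
  choose g hgW hg2 using hsurj
  set f : (Fin q → Quaternion ℝ) → Fin p → Quaternion ℝ := fun w => (g w).1 with hfdef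
  have huniq : ∀ v ∈ W, v = (f v.2, v.2) := by
    intro v hv
    have hvg := inj v hv (g v.2) (hgW v.2) (hg2 v.2).symm
    exact hvg.trans (Prod.ext rfl (hg2 v.2))
  have hadd : ∀ w w', f (w + w') = f w + f w' := by
    intro w w'
    have hmem := Wadd _ (hgW w) _ (hgW w')
    have heq := inj (g (w+w')) (hgW _) _ hmem
      (by rw [hg2, Prod.snd_add, hg2, hg2])
    exact congrArg Prod.fst heq
  have hsmul : ∀ w (c : Quaternion ℝ), f (fun j => w j * c) = fun i => f w i * c := by
    intro w c
    have hmem := Wsmul _ (hgW w) c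
    have heq := inj (g (fun j => w j * c)) (hgW _) _ hmem
      (by rw [hg2]; funext j; exact (congrArg (· * c) (congrFun (hg2 w) j)).symm)
    exact congrArg Prod.fst heq
  have h0W : (0 : (Fin p → Quaternion ℝ) × (Fin q → Quaternion ℝ)) ∈ W := by
    have h := Wsmul _ (hgW 0) 0
    simp only [mul_zero] at h; exact h
  have hf0 : f 0 = 0 := by
    have heq := inj (g 0) (hgW 0) 0 h0W (by rw [hg2]; rfl)
    exact congrArg Prod.fst heq
  set X : Matrix (Fin p) (Fin q) (Quaternion ℝ) :=
    Matrix.of (fun i j => f (Pi.single j 1) i) with hXdef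
  have hfsum : ∀ (s : Finset (Fin q)) (u : Fin q → (Fin q → Quaternion ℝ)),
      f (∑ j ∈ s, u j) = ∑ j ∈ s, f (u j) := by
    intro s u
    induction s using Finset.cons_induction with
    | empty => simpa using hf0
    | cons a s ha ih => rw [Finset.sum_cons, Finset.sum_cons, hadd, ih]
  have hfX : ∀ w, f w = X *ᵥ w := by
    intro w
    have hw : w = ∑ j, Pi.single j (w j) := (Finset.univ_sum_single w).symm
    calc f w = f (∑ j, Pi.single j (w j)) := by rw [← hw]
      _ = ∑ j, f (Pi.single j (w j)) := hfsum _ _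
      _ = ∑ j, (fun i => X i j * w j) := by
          refine Finset.sum_congr rfl fun j _ => ?_
          have hsingle : Pi.single j (w j) = fun k => (Pi.single j 1 : Fin q → Quaternion ℝ) k * w j := by
            funext k
            by_cases hk : k = j
            · subst hk; simp
            · simp [Pi.single_eq_of_ne hk]
          rw [hsingle, hsmul]
          rfl
      _ = X *ᵥ w := by
          funext i
          simp [Matrix.mulVec, dotProduct, Finset.sum_apply]
  have hWgraph : W = {v | ∃ w, v = (X *ᵥ w, w)} := by
    ext v
    constructor
    · intro hv
      exact ⟨v.2, by rw [← hfX]; exact huniq v hv⟩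
    · rintro ⟨w, rfl⟩
      rw [← hfX]
      have hgweq : ((f w, w) : (Fin p → Quaternion ℝ) × (Fin q → Quaternion ℝ)) = g w :=
        Prod.ext rfl (hg2 w).symm
      rw [hgweq]
      exact hgW w
  have hpos : ∀ w : Fin q → Quaternion ℝ, w ≠ 0 →
      (star w ⬝ᵥ ((1 - X.conjTranspose * X) *ᵥ w)).re > 0 := by
    intro w hw
    have hv : ((X *ᵥ w, w) : (Fin p → Quaternion ℝ) × (Fin q → Quaternion ℝ)) ∈ W := by
      rw [hWgraph]; exact ⟨w, rfl⟩
    have hvne : ((X *ᵥ w, w) : (Fin p → Quaternion ℝ) × (Fin q → Quaternion ℝ)) ≠ 0 :=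
      fun hEq => hw (congrArg Prod.snd hEq)
    have hlt := Wneg _ hv hvne
    rw [hh] at hlt
    have hdot : star w ⬝ᵥ ((1 - X.conjTranspose * X) *ᵥ w)
        = (∑ j, star (w j) * w j) - ∑ i, star ((X *ᵥ w) i) * (X *ᵥ w) i := by
      rw [Matrix.sub_mulVec, Matrix.one_mulVec, dotProduct_sub, ← Matrix.mulVec_mulVec,
        Matrix.dotProduct_mulVec, ← Matrix.star_mulVec]
      simp [dotProduct]
    rw [hdot]
    simp only [Quaternion.re_sub] at hlt ⊢
    linarith
  refine ⟨X, ⟨hWgraph, hpos⟩, ?_⟩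
  rintro X' ⟨hX', -⟩
  refine Matrix.ext fun i j => ?_
  have hmem : ((X *ᵥ Pi.single j 1, Pi.single j 1) :
      (Fin p → Quaternion ℝ) × (Fin q → Quaternion ℝ)) ∈ W := by
    rw [hWgraph]; exact ⟨_, rfl⟩
  rw [hX'] at hmem
  obtain ⟨w', hw'⟩ := hmem
  have h2 : Pi.single j (1 : Quaternion ℝ) = w' := congrArg Prod.snd hw'
  have h1 : X *ᵥ Pi.single j 1 = X' *ᵥ Pi.single j 1 := by
    have hfst := congrArg Prod.fst hw'
    rw [← h2] at hfst
    exact hfst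
  have := congrFun h1 i
  simpa using this.symm
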